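/- Global error bound for the SI process (Theorem 2A): suppose k ≥ 3, 0 < h ≤ 1, and A₁, A₂, … are i.i.d. random edge-timer vectors, each a vector of independent exponential rate-1 random variables indexed by the edges of G. Let X₀ = X̃₀ = x₀ for an arbitrary initial state x₀, Xᵢ = g(Xᵢ₋₁, Aᵢ) and X̃ᵢ = g̃(X̃ᵢ₋₁, Aᵢ). Then for every i ≥ 0, E[‖Xᵢ − X̃ᵢ‖₁] ≤ C_SI · K_SI · h, where C_SI = n·k²·e^{k−2}, K_SI = (e^{kT} − 1)/k, and T = i·h. -/

import Mathlib

open MeasureTheory ProbabilityTheory Real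

/-- View a Boolean infection state as a real number (`true ↦ 1`, `false ↦ 0`). -/
def boolToR (b : Bool) : ℝ := if b then 1 else 0

open Classical in
/-- One step of the SI discrete-time simulation (DTS): node `j` is infected afterwards iff
it was infected, or some infected neighbor's edge timer fires within time `h`. -/
noncomputable def siDTS {V : Type*} (G : SimpleGraph V) (h : ℝ) (x : V → Bool)
    (a : G.edgeSet → ℝ) : V → Bool := fun j =>
  if x j = true ∨ ∃ j', ∃ hadj : G.Adj j j',
      x j' = true ∧ a ⟨s(j, j'), (SimpleGraph.mem_edgeSet G).mpr hadj⟩ ≤ h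
  then true else false

open Classical in
/-- State at time `h` of the SI discrete-event simulation (DES) started at `x` with edge
timers `a`, via the first-passage-percolation description: node `j` is infected iff it was
infected, or there is a path from an infected node to `j` whose timers sum to at most `h`. -/
noncomputable def siDES {V : Type*} (G : SimpleGraph V) (h : ℝ) (x : V → Bool)
    (a : G.edgeSet → ℝ) : V → Bool := fun j =>
  if x j = true ∨ ∃ j₀, ∃ p : G.Walk j₀ j, x j₀ = true ∧
      (p.edges.attach.map fun e => a ⟨e.1, p.edges_subset_edgeSet e.2⟩).sum ≤ h
  then true else false

/-! ### Auxiliary deterministic lemmas -/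

namespace SIAux

open Classical in
/-- Extend an edge-timer vector to all of `Sym2 V` by `0`. -/
noncomputable def aext {V : Type*} (G : SimpleGraph V) (a : G.edgeSet → ℝ) :
    Sym2 V → ℝ := fun e => if he : e ∈ G.edgeSet then a ⟨e, he⟩ else 0

lemma aext_eq {V : Type*} (G : SimpleGraph V) (a : G.edgeSet → ℝ) {e : Sym2 V}
    (he : e ∈ G.edgeSet) : aext G a e = a ⟨e, he⟩ := dif_pos he

lemma aext_of_adj {V : Type*} (G : SimpleGraph V) (a : G.edgeSet → ℝ) {u v : V}
    (huv : G.Adj u v) :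
    aext G a s(u, v) = a ⟨s(u, v), (SimpleGraph.mem_edgeSet G).mpr huv⟩ := by
  rw [aext, dif_pos]

lemma aext_nonneg {V : Type*} (G : SimpleGraph V) {a : G.edgeSet → ℝ}
    (ha : ∀ e, 0 ≤ a e) (e : Sym2 V) : 0 ≤ aext G a e := by
  rw [aext]; split <;> simp [ha]

lemma wsum_eq {V : Type*} (G : SimpleGraph V) (a : G.edgeSet → ℝ) {u v : V}
    (p : G.Walk u v) :
    (p.edges.attach.map fun e => a ⟨e.1, p.edges_subset_edgeSet e.2⟩).sum
      = (p.edges.map (aext G a)).sum := by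
  have : (p.edges.attach.map fun e => a ⟨e.1, p.edges_subset_edgeSet e.2⟩)
      = p.edges.attach.map fun e => aext G a e.1 := by
    apply List.map_congr_left
    intro e _
    exact (aext_eq G a (p.edges_subset_edgeSet e.2)).symm
  rw [this]
  rw [show (fun e : {x // x ∈ p.edges} => aext G a e.1) = (aext G a) ∘ Subtype.val from rfl,
    ← List.map_map, List.attach_map_subtype_val]

lemma aext_of_adj' {V : Type*} (G : SimpleGraph V) (a : G.edgeSet → ℝ) {u v : V}
    (huv : G.Adj u v) (he : s(u,v) ∈ G.edgeSet) :
    a ⟨s(u, v), he⟩ = aext G a s(u,v) := (aext_of_adj G a huv).symm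

lemma siDTS_iff {V : Type*} (G : SimpleGraph V) (h : ℝ) (x : V → Bool)
    (a : G.edgeSet → ℝ) (j : V) :
    siDTS G h x a j = true ↔
      (x j = true ∨ ∃ j', G.Adj j j' ∧ x j' = true ∧ aext G a s(j, j') ≤ h) := by
  rw [siDTS]
  split
  · rename_i hc
    refine iff_of_true rfl ?_
    rcases hc with hc | ⟨j', hadj, hx, hle⟩
    · exact Or.inl hc
    · exact Or.inr ⟨j', hadj, hx, by rwa [aext_of_adj G a hadj]⟩
  · rename_i hc
    refine iff_of_false (by simp) ?_
    intro hcon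
    apply hc
    rcases hcon with hc' | ⟨j', hadj, hx, hle⟩
    · exact Or.inl hc'
    · exact Or.inr ⟨j', hadj, hx, by rwa [← aext_of_adj G a hadj]⟩

lemma siDES_iff {V : Type*} (G : SimpleGraph V) (h : ℝ) (x : V → Bool)
    (a : G.edgeSet → ℝ) (j : V) :
    siDES G h x a j = true ↔
      (x j = true ∨ ∃ j₀, ∃ p : G.Walk j₀ j, x j₀ = true ∧
        (p.edges.map (aext G a)).sum ≤ h) := by
  rw [siDES]
  split
  · rename_i hc
    refine iff_of_true rfl ?_
    rcases hc with hc | ⟨j₀, p, hx, hle⟩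
    · exact Or.inl hc
    · exact Or.inr ⟨j₀, p, hx, by rwa [wsum_eq G a p] at hle⟩
  · rename_i hc
    refine iff_of_false (by simp) ?_
    intro hcon
    apply hc
    rcases hcon with hc' | ⟨j₀, p, hx, hle⟩
    · exact Or.inl hc'
    · exact Or.inr ⟨j₀, p, hx, by rwa [wsum_eq G a p]⟩

lemma siDTS_le_siDES {V : Type*} (G : SimpleGraph V) (h : ℝ) (x : V → Bool)
    (a : G.edgeSet → ℝ) (j : V) (hj : siDTS G h x a j = true) :
    siDES G h x a j = true := by
  rw [siDTS_iff] at hj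
  rw [siDES_iff]
  rcases hj with hj | ⟨j', hadj, hx, hle⟩
  · exact Or.inl hj
  · refine Or.inr ⟨j', SimpleGraph.Walk.cons hadj.symm SimpleGraph.Walk.nil, hx, ?_⟩
    simp only [SimpleGraph.Walk.edges_cons, SimpleGraph.Walk.edges_nil, List.map_cons,
      List.map_nil, List.sum_cons, List.sum_nil, add_zero]
    rwa [Sym2.eq_swap]

lemma siDTS_mono {V : Type*} (G : SimpleGraph V) (h : ℝ) {x y : V → Bool}
    (hxy : ∀ j, x j = true → y j = true) (a : G.edgeSet → ℝ) (j : V)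
    (hj : siDTS G h x a j = true) : siDTS G h y a j = true := by
  rw [siDTS_iff] at hj ⊢
  rcases hj with hj | ⟨j', hadj, hx, hle⟩
  · exact Or.inl (hxy j hj)
  · exact Or.inr ⟨j', hadj, hxy j' hx, hle⟩



lemma boolToR_nonneg (b : Bool) : 0 ≤ boolToR b := by cases b <;> simp [boolToR]
lemma boolToR_le_one (b : Bool) : boolToR b ≤ 1 := by cases b <;> simp [boolToR]
lemma boolToR_true : boolToR true = 1 := rfl
lemma boolToR_false : boolToR false = 0 := rfl

lemma diff_nonneg {b c : Bool} (hbc : b = true → c = true) :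
    0 ≤ boolToR c - boolToR b := by
  cases b
  · simp [boolToR_false, boolToR_nonneg]
  · simp [hbc rfl, boolToR_true, boolToR_le_one]

lemma list_sum_map_le {α : Type*} {l₁ l₂ : List α} (hn : l₁.Nodup) (hs : l₁ ⊆ l₂)
    {f : α → ℝ} (hf : ∀ e, 0 ≤ f e) : (l₁.map f).sum ≤ (l₂.map f).sum := by
  classical
  have hle : (l₁ : Multiset α) ≤ (l₂ : Multiset α) := by
    rw [Multiset.le_iff_count]
    intro e
    by_cases he : e ∈ l₁
    · have h1 : l₁.count e ≤ 1 := List.nodup_iff_count_le_one.mp hn e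
      have h2 : 1 ≤ l₂.count e := List.count_pos_iff.mpr (hs he)
      simpa using le_trans h1 h2
    · simp [List.count_eq_zero_of_not_mem he]
  obtain ⟨t, ht⟩ := Multiset.le_iff_exists_add.mp hle
  have : ((l₂ : Multiset α).map f).sum = ((l₁ : Multiset α).map f).sum + (t.map f).sum := by
    rw [ht, Multiset.map_add, Multiset.sum_add]
  have hres : ((l₁ : Multiset α).map f).sum ≤ ((l₂ : Multiset α).map f).sum := by
    rw [this]
    have : 0 ≤ (t.map f).sum := Multiset.sum_nonneg (by
      intro x hx
      obtain ⟨y, _, rfl⟩ := Multiset.mem_map.mp hx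
      exact hf y)
    linarith
  simpa using hres

lemma mem_le_sum {α : Type*} (l : List α) {f : α → ℝ} (hf : ∀ e, 0 ≤ f e) {e : α}
    (he : e ∈ l) : f e ≤ (l.map f).sum := by
  refine List.single_le_sum ?_ _ (List.mem_map_of_mem he)
  intro x hx
  obtain ⟨y, _, rfl⟩ := List.mem_map.mp hx
  exact hf y

/-- The "bad pair" event responsible for the DES/DTS one-step discrepancy. -/
def pairE {V : Type*} (G : SimpleGraph V) (h : ℝ) (a : G.edgeSet → ℝ) (j : V) : Prop :=
  ∃ j' j'', G.Adj j j' ∧ G.Adj j' j'' ∧ j'' ≠ j ∧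
    aext G a s(j, j') ≤ h ∧ aext G a s(j', j'') ≤ h

open Classical in
/-- Key deterministic one-step estimate. -/
lemma key_step {V : Type*} [Fintype V] (G : SimpleGraph V) (h : ℝ) {x y : V → Bool}
    (hxy : ∀ j, x j = true → y j = true) {a : G.edgeSet → ℝ} (ha : ∀ e, 0 ≤ a e) (j : V) :
    boolToR (siDES G h y a j) - boolToR (siDTS G h x a j) ≤
      (if pairE G h a j then (1:ℝ) else 0)
      + (boolToR (y j) - boolToR (x j))
      + ∑ j' : V, (if G.Adj j j' then
          (boolToR (y j') - boolToR (x j')) *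
            (if aext G a s(j, j') ≤ h then (1:ℝ) else 0) else 0) := by
  classical
  have hterm_nonneg : ∀ j' : V, 0 ≤ (if G.Adj j j' then
      (boolToR (y j') - boolToR (x j')) *
        (if aext G a s(j, j') ≤ h then (1:ℝ) else 0) else 0) := by
    intro j'
    split
    · exact mul_nonneg (diff_nonneg (hxy j')) (by positivity)
    · exact le_rfl
  have hpair_nonneg : (0:ℝ) ≤ (if pairE G h a j then (1:ℝ) else 0) := by positivity
  have hmid_nonneg : 0 ≤ boolToR (y j) - boolToR (x j) := diff_nonneg (hxy j)
  have hsum_nonneg : (0:ℝ) ≤ ∑ j' : V, (if G.Adj j j' then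
      (boolToR (y j') - boolToR (x j')) *
        (if aext G a s(j, j') ≤ h then (1:ℝ) else 0) else 0) :=
    Finset.sum_nonneg fun j' _ => hterm_nonneg j'
  by_cases hDES : siDES G h y a j = true
  swap
  · have : siDES G h y a j = false := Bool.not_eq_true _ |>.mp hDES
    rw [this, boolToR_false]
    have := boolToR_nonneg (siDTS G h x a j)
    linarith
  by_cases hDTS : siDTS G h x a j = true
  · rw [hDTS, boolToR_true]
    have := boolToR_le_one (siDES G h y a j)
    linarith
  -- main case
  have hLHS : boolToR (siDES G h y a j) - boolToR (siDTS G h x a j) = 1 := by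
    rw [hDES, Bool.not_eq_true _ |>.mp hDTS, boolToR_true, boolToR_false]; ring
  rw [hLHS]
  -- it suffices to find one term equal to at least 1
  have hxj : x j = false := by
    by_contra hxj
    exact hDTS ((siDTS_iff G h x a j).mpr (Or.inl (Bool.not_eq_false _ |>.mp hxj)))
  rcases (siDES_iff G h y a j).mp hDES with hyj | ⟨j₀, p, hy₀, hsum⟩
  · -- y j = true, x j = false
    have : boolToR (y j) - boolToR (x j) = 1 := by rw [hyj, hxj, boolToR_true, boolToR_false]; ring
    linarith
  by_cases hyj : y j = true
  · have : boolToR (y j) - boolToR (x j) = 1 := by rw [hyj, hxj, boolToR_true, boolToR_false]; ring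
    linarith
  -- now y j = false, so j₀ ≠ j
  have hj₀ : j₀ ≠ j := fun hc => hyj (hc ▸ hy₀)
  set q := p.bypass with hq
  have hqpath : q.IsPath := p.bypass_isPath
  have hqsub : q.edges ⊆ p.edges := p.edges_bypass_subset
  have hfnn : ∀ e, 0 ≤ aext G a e := aext_nonneg G ha
  have hqsum : (q.edges.map (aext G a)).sum ≤ h :=
    le_trans (list_sum_map_le hqpath.edges_nodup hqsub hfnn) hsum
  have hedge_le : ∀ e ∈ q.edges, aext G a e ≤ h :=
    fun e he => le_trans (mem_le_sum q.edges hfnn he) hqsum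
  -- analyze the reversed path
  have hrpath : q.reverse.IsPath := hqpath.reverse
  have hredge : ∀ e ∈ q.reverse.edges, aext G a e ≤ h := by
    intro e he
    exact hedge_le e (by rwa [SimpleGraph.Walk.edges_reverse, List.mem_reverse] at he)
  revert hrpath hredge
  generalize q.reverse = r
  intro hrpath hredge
  cases r with
  | nil => exact absurd rfl hj₀
  | cons hadj r' =>
    rename_i j'
    cases r' with
    | nil =>
      -- single-edge path: j adjacent to j₀, timer small, x j₀ must be false
      have hle : aext G a s(j, j₀) ≤ h := by
        apply hredge
        simp [SimpleGraph.Walk.edges_cons]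
      have hxj₀ : x j₀ = false := by
        by_contra hc
        exact hDTS ((siDTS_iff G h x a j).mpr (Or.inr ⟨j₀, hadj, Bool.not_eq_false _ |>.mp hc, hle⟩))
      have hterm : (if G.Adj j j₀ then
          (boolToR (y j₀) - boolToR (x j₀)) *
            (if aext G a s(j, j₀) ≤ h then (1:ℝ) else 0) else 0) = 1 := by
        rw [if_pos hadj, if_pos hle, hy₀, hxj₀, boolToR_true, boolToR_false]; ring
      have : (1:ℝ) ≤ ∑ j' : V, (if G.Adj j j' then
          (boolToR (y j') - boolToR (x j')) *
            (if aext G a s(j, j') ≤ h then (1:ℝ) else 0) else 0) := by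
        have h1 := Finset.single_le_sum (fun i _ => hterm_nonneg i) (Finset.mem_univ j₀)
        rwa [hterm] at h1
      linarith
    | cons hadj₂ r'' =>
      rename_i j''
      -- two-edge prefix: the pair event holds
      have hne : j'' ≠ j := by
        intro hc
        subst hc
        have hsupp := hrpath.support_nodup
        simp only [SimpleGraph.Walk.support_cons, List.nodup_cons] at hsupp
        exact hsupp.1 (by simp [r''.start_mem_support])
      have hle₁ : aext G a s(j, j') ≤ h := by
        apply hredge
        simp [SimpleGraph.Walk.edges_cons]
      have hle₂ : aext G a s(j', j'') ≤ h := by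
        apply hredge
        simp [SimpleGraph.Walk.edges_cons]
      have hpair : pairE G h a j := ⟨j', j'', hadj, hadj₂, hne, hle₁, hle₂⟩
      rw [if_pos hpair]
      linarith


/-- Walks in a graph on a finite vertex type form a countable type. -/
lemma walk_countable {V : Type*} [Finite V] (G : SimpleGraph V) (u v : V) :
    Countable (G.Walk u v) := by
  haveI := Fintype.ofFinite V
  classical
  haveI : G.LocallyFinite := fun w => Fintype.ofFinite _
  have hinj : Function.Injective
      (fun p : G.Walk u v => (⟨p.length, ⟨p, rfl⟩⟩ :
        Σ n : ℕ, {p : G.Walk u v // p.length = n})) := by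
    intro p q hpq
    exact congrArg (fun s : (Σ n : ℕ, {p : G.Walk u v // p.length = n}) => s.2.1) hpq
  exact Function.Injective.countable hinj

/-- Finite list sums of measurable functions are measurable. -/
lemma measurable_list_sum {Ω ι : Type*} {m : MeasurableSpace Ω} (l : List ι)
    {f : ι → Ω → ℝ} (hf : ∀ e ∈ l, Measurable[m] (f e)) :
    Measurable[m] fun ω => (l.map fun e => f e ω).sum := by
  induction l with
  | nil => simpa using measurable_const
  | cons e l ih =>
    simp only [List.map_cons, List.sum_cons]
    exact (hf e List.mem_cons_self).add (ih fun e' he' => hf e' (List.mem_cons_of_mem _ he'))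

lemma expMeasure_Iic {t : ℝ} (ht : 0 ≤ t) :
    (expMeasure 1 (Set.Iic t)).toReal = 1 - Real.exp (-t) := by
  haveI := isProbabilityMeasure_expMeasure one_pos
  have h1 : ((cdf (expMeasure 1)) t : ℝ) = (expMeasure 1 (Set.Iic t)).toReal :=
    cdf_eq_real _ t
  have h2 : ((cdf (expMeasure 1)) t : ℝ) = if 0 ≤ t then 1 - Real.exp (-(1 * t)) else 0 :=
    cdf_expMeasure_eq one_pos t
  rw [if_pos ht, one_mul] at h2
  rw [← h1, h2]

lemma expMeasure_Iio_zero : expMeasure 1 (Set.Iio 0) = 0 := by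
  rw [expMeasure, gammaMeasure, withDensity_apply _ measurableSet_Iio]
  exact lintegral_exponentialPDF_of_nonpos le_rfl

/-- Monotonicity of independence of σ-algebras. -/
lemma indep_mono {Ω : Type*} {m₁ m₂ m₁' m₂' mΩ : MeasurableSpace Ω}
    {μ : @Measure Ω mΩ} (hind : @Indep Ω m₁ m₂ mΩ μ) (h₁ : m₁' ≤ m₁) (h₂ : m₂' ≤ m₂) :
    @Indep Ω m₁' m₂' mΩ μ := by
  rw [Indep_iff] at hind ⊢
  exact fun t1 t2 ht1 ht2 => hind t1 t2 (h₁ _ ht1) (h₂ _ ht2)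

lemma integrable_bdd {Ω : Type*} [MeasureSpace Ω] [IsProbabilityMeasure (ℙ : Measure Ω)]
    {f : Ω → ℝ} (C : ℝ) (hf : Measurable f) (hb : ∀ ω, |f ω| ≤ C) :
    Integrable f ℙ := by
  refine (integrable_const C).mono' hf.aestronglyMeasurable ?_
  exact Filter.Eventually.of_forall fun ω => by simpa [Real.norm_eq_abs] using hb ω

open Classical in
/-- Counting bound: sums of an `if adjacent` term are bounded using the degree bound. -/
lemma sum_adj_le {V : Type*} [Fintype V] (G : SimpleGraph V) (k : ℕ)
    (hdeg : ∀ j : V, (G.neighborSet j).ncard ≤ k) (j : V) {c : ℝ} (hc : 0 ≤ c) :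
    ∑ j' : V, (if G.Adj j j' then c else 0) ≤ (k : ℝ) * c := by
  rw [Finset.sum_ite, Finset.sum_const, Finset.sum_const, smul_zero, add_zero, nsmul_eq_mul]
  have hcard : (Finset.univ.filter fun j' => G.Adj j j').card ≤ k := by
    have heq : (Finset.univ.filter fun j' => G.Adj j j') = (G.neighborSet j).toFinset := by
      ext j'; simp [Set.mem_toFinset, SimpleGraph.mem_neighborSet]
    rw [heq]
    have := hdeg j
    rwa [Set.ncard_eq_toFinset_card'] at this
  exact mul_le_mul_of_nonneg_right (by exact_mod_cast hcard) hc


/-! ### Filtration generated by the timer variables -/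

def mSlice {Ω V : Type*} [MeasurableSpace Ω] (G : SimpleGraph V)
    (A : ℕ → Ω → G.edgeSet → ℝ) (p : ℕ × G.edgeSet) : MeasurableSpace Ω :=
  MeasurableSpace.comap (fun ω => A (p.1 + 1) ω p.2) inferInstance

def filt {Ω V : Type*} [MeasurableSpace Ω] (G : SimpleGraph V)
    (A : ℕ → Ω → G.edgeSet → ℝ) (i : ℕ) : MeasurableSpace Ω :=
  ⨆ p ∈ {q : ℕ × G.edgeSet | q.1 < i}, mSlice G A p

section Filtration

variable {Ω V : Type*} [MeasurableSpace Ω] {G : SimpleGraph V}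
  {A : ℕ → Ω → G.edgeSet → ℝ}

lemma measA_slice (p : ℕ × G.edgeSet) :
    Measurable[mSlice G A p] (fun ω => A (p.1 + 1) ω p.2) :=
  measurable_iff_comap_le.mpr le_rfl

lemma mSlice_le (hAmeas : ∀ i : ℕ, ∀ e : G.edgeSet, Measurable fun ω => A (i + 1) ω e)
    (p : ℕ × G.edgeSet) : mSlice G A p ≤ ‹MeasurableSpace Ω› :=
  measurable_iff_comap_le.mp (hAmeas p.1 p.2)

lemma filt_le (hAmeas : ∀ i : ℕ, ∀ e : G.edgeSet, Measurable fun ω => A (i + 1) ω e)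
    (i : ℕ) : filt G A i ≤ ‹MeasurableSpace Ω› :=
  iSup₂_le fun p _ => mSlice_le hAmeas p

lemma filt_mono {i i' : ℕ} (hii' : i ≤ i') : filt G A i ≤ filt G A i' := by
  apply iSup₂_le
  intro p hp
  exact le_iSup₂_of_le p (lt_of_lt_of_le hp hii') le_rfl

lemma measA_filt {p : ℕ × G.edgeSet} {i : ℕ} (hp : p.1 < i) :
    Measurable[filt G A i] (fun ω => A (p.1 + 1) ω p.2) :=
  (measA_slice p).mono (le_iSup₂_of_le p hp le_rfl) le_rfl

lemma meas_aext {i : ℕ} (e : Sym2 V) :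
    Measurable[filt G A (i + 1)] fun ω => aext G (A (i + 1) ω) e := by
  by_cases he : e ∈ G.edgeSet
  · have : (fun ω => aext G (A (i + 1) ω) e) = fun ω => A (i + 1) ω ⟨e, he⟩ := by
      funext ω; exact aext_eq G _ he
    rw [this]
    exact measA_filt (p := (i, ⟨e, he⟩)) (Nat.lt_succ_self i)
  · have : (fun ω => aext G (A (i + 1) ω) e) = fun _ => (0 : ℝ) := by
      funext ω; exact dif_neg he
    rw [this]
    exact measurable_const

lemma measurable_bool_of_set {m : MeasurableSpace Ω} {f : Ω → Bool}
    (hs : MeasurableSet[m] {ω | f ω = true}) : Measurable[m] f := by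
  have : f = fun ω => if ω ∈ {ω | f ω = true} then true else false := by
    funext ω
    by_cases hω : f ω = true <;> simp [hω]
  rw [this]
  exact Measurable.ite hs measurable_const measurable_const

lemma measurableSet_eq_true {m : MeasurableSpace Ω} {f : Ω → Bool}
    (hf : Measurable[m] f) : MeasurableSet[m] {ω | f ω = true} :=
  hf (measurableSet_singleton true)

end Filtration

section States

variable {Ω : Type*} [MeasureSpace Ω]
  {V : Type*} [Fintype V] {G : SimpleGraph V} {h : ℝ}
  {A : ℕ → Ω → G.edgeSet → ℝ} {x₀ : V → Bool} {X Xt : ℕ → Ω → V → Bool}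

/-- Joint measurability of the DTS and DES states with respect to the filtration. -/
lemma meas_states
    (hX0 : ∀ ω, X 0 ω = x₀) (hXt0 : ∀ ω, Xt 0 ω = x₀)
    (hX : ∀ i : ℕ, ∀ ω, X (i + 1) ω = siDTS G h (X i ω) (A (i + 1) ω))
    (hXt : ∀ i : ℕ, ∀ ω, Xt (i + 1) ω = siDES G h (Xt i ω) (A (i + 1) ω)) :
    ∀ i : ℕ, (∀ j, Measurable[filt G A i] fun ω => X i ω j) ∧
      (∀ j, Measurable[filt G A i] fun ω => Xt i ω j) := by
  intro i
  induction i with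
  | zero =>
    constructor <;> intro j
    · simp only [hX0]; exact measurable_const
    · simp only [hXt0]; exact measurable_const
  | succ i ih =>
    have hmono : filt G A i ≤ filt G A (i + 1) := filt_mono (Nat.le_succ i)
    constructor <;> intro j
    · apply measurable_bool_of_set
      have hset : {ω | X (i+1) ω j = true} =
          {ω | X i ω j = true} ∪ ⋃ j' : V,
            {ω | G.Adj j j' ∧ X i ω j' = true ∧ aext G (A (i+1) ω) s(j, j') ≤ h} := by
        ext ω
        simp only [Set.mem_setOf_eq, Set.mem_union, Set.mem_iUnion, hX i ω,
          siDTS_iff G h (X i ω) (A (i+1) ω) j]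
      rw [hset]
      apply MeasurableSet.union
      · exact (measurableSet_eq_true ((ih.1 j).mono hmono le_rfl))
      · apply MeasurableSet.iUnion
        intro j'
        by_cases hadj : G.Adj j j'
        · have : {ω | G.Adj j j' ∧ X i ω j' = true ∧ aext G (A (i+1) ω) s(j, j') ≤ h}
              = {ω | X i ω j' = true} ∩ ((fun ω => aext G (A (i+1) ω) s(j, j')) ⁻¹' Set.Iic h) := by
            ext ω; simp [hadj, Set.mem_setOf_eq]
          rw [this]
          exact (measurableSet_eq_true ((ih.1 j').mono hmono le_rfl)).inter
            ((meas_aext _) measurableSet_Iic)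
        · have : {ω | G.Adj j j' ∧ X i ω j' = true ∧ aext G (A (i+1) ω) s(j, j') ≤ h} = ∅ := by
            ext ω; simp [hadj]
          rw [this]; exact @MeasurableSet.empty Ω (filt G A (i+1))
    · apply measurable_bool_of_set
      have hset : {ω | Xt (i+1) ω j = true} =
          {ω | Xt i ω j = true} ∪ ⋃ j₀ : V, ⋃ p : G.Walk j₀ j,
            ({ω | Xt i ω j₀ = true} ∩
              {ω | (p.edges.map (aext G (A (i+1) ω))).sum ≤ h}) := by
        ext ω
        simp only [Set.mem_setOf_eq, Set.mem_union, Set.mem_iUnion, hXt i ω,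
          siDES_iff G h (Xt i ω) (A (i+1) ω) j, Set.mem_inter_iff]
      rw [hset]
      apply MeasurableSet.union
      · exact (measurableSet_eq_true ((ih.2 j).mono hmono le_rfl))
      · apply MeasurableSet.iUnion
        intro j₀
        haveI : Countable (G.Walk j₀ j) := walk_countable G j₀ j
        apply MeasurableSet.iUnion
        intro p
        refine (measurableSet_eq_true ((ih.2 j₀).mono hmono le_rfl)).inter ?_
        have : {ω | (p.edges.map (aext G (A (i+1) ω))).sum ≤ h}
            = (fun ω => (p.edges.map fun e => aext G (A (i+1) ω) e).sum) ⁻¹' Set.Iic h := rfl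
        rw [this]
        exact (measurable_list_sum p.edges fun e _ => meas_aext e) measurableSet_Iic

end States

end SIAux

namespace SIAux

section Prob

variable {Ω : Type*} [MeasureSpace Ω] [IsProbabilityMeasure (ℙ : Measure Ω)]
  {V : Type*} [Fintype V] {G : SimpleGraph V} {h : ℝ}
  {A : ℕ → Ω → G.edgeSet → ℝ}

open Classical in
lemma meas_aext_ind (hAmeas : ∀ i : ℕ, ∀ e : G.edgeSet, Measurable fun ω => A (i + 1) ω e)
    (i : ℕ) (e : Sym2 V) :
    Measurable fun ω => (if aext G (A (i + 1) ω) e ≤ h then (1:ℝ) else 0) := by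
  have hm : Measurable fun ω => aext G (A (i + 1) ω) e :=
    (meas_aext e).mono (filt_le hAmeas (i+1)) le_rfl
  exact Measurable.ite (hm measurableSet_Iic) measurable_const measurable_const

open Classical in
lemma meas_pairB (hAmeas : ∀ i : ℕ, ∀ e : G.edgeSet, Measurable fun ω => A (i + 1) ω e)
    (i : ℕ) (j : V) :
    Measurable fun ω => (if pairE G h (A (i + 1) ω) j then (1:ℝ) else 0) := by
  have hms : MeasurableSet {ω | pairE G h (A (i + 1) ω) j} := by
    have hset : {ω | pairE G h (A (i + 1) ω) j} = ⋃ j' : V, ⋃ j'' : V,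
        {ω | G.Adj j j' ∧ G.Adj j' j'' ∧ j'' ≠ j ∧
          aext G (A (i+1) ω) s(j, j') ≤ h ∧ aext G (A (i+1) ω) s(j', j'') ≤ h} := by
      ext ω
      simp only [Set.mem_setOf_eq, Set.mem_iUnion, pairE]
    rw [hset]
    apply MeasurableSet.iUnion; intro j'
    apply MeasurableSet.iUnion; intro j''
    by_cases hc : G.Adj j j' ∧ G.Adj j' j'' ∧ j'' ≠ j
    · have : {ω | G.Adj j j' ∧ G.Adj j' j'' ∧ j'' ≠ j ∧
          aext G (A (i+1) ω) s(j, j') ≤ h ∧ aext G (A (i+1) ω) s(j', j'') ≤ h}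
          = ((fun ω => aext G (A (i+1) ω) s(j, j')) ⁻¹' Set.Iic h) ∩
            ((fun ω => aext G (A (i+1) ω) s(j', j'')) ⁻¹' Set.Iic h) := by
        ext ω; simp [hc.1, hc.2.1, hc.2.2, Set.mem_setOf_eq, and_assoc]
      rw [this]
      exact (((meas_aext s(j,j')).mono (filt_le hAmeas (i+1)) le_rfl) measurableSet_Iic).inter
        (((meas_aext s(j',j'')).mono (filt_le hAmeas (i+1)) le_rfl) measurableSet_Iic)
    · have : {ω | G.Adj j j' ∧ G.Adj j' j'' ∧ j'' ≠ j ∧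
          aext G (A (i+1) ω) s(j, j') ≤ h ∧ aext G (A (i+1) ω) s(j', j'') ≤ h} = ∅ := by
        ext ω
        simp only [Set.mem_setOf_eq, Set.mem_empty_iff_false, iff_false]
        intro hcon
        exact hc ⟨hcon.1, hcon.2.1, hcon.2.2.1⟩
      rw [this]
      exact MeasurableSet.empty
  exact Measurable.ite hms measurable_const measurable_const

open Classical in
lemma measurable_boolToR_comp {m : MeasurableSpace Ω} {f : Ω → Bool}
    (hf : Measurable[m] f) : Measurable[m] fun ω => boolToR (f ω) := by
  have : (fun ω => boolToR (f ω)) = fun ω => if f ω = true then (1:ℝ) else 0 := by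
    funext ω; cases hb : f ω <;> simp [boolToR]
  rw [this]
  exact Measurable.ite (measurableSet_eq_true hf) measurable_const measurable_const

lemma abs_boolToR_diff {b c : Bool} (hbc : b = true → c = true) :
    |boolToR b - boolToR c| = boolToR c - boolToR b := by
  cases b
  · cases c <;> simp [boolToR]
  · simp [hbc rfl]

/-- Independence of a past-measurable variable from a function of a fresh timer. -/
lemma indep_past (hAmeas : ∀ i : ℕ, ∀ e : G.edgeSet, Measurable fun ω => A (i + 1) ω e)
    (hAindep : iIndepFun
      (fun (p : ℕ × G.edgeSet) ω => A (p.1 + 1) ω p.2) ℙ)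
    (i : ℕ) (e : G.edgeSet) {Z : Ω → ℝ} (hZ : Measurable[filt G A i] Z)
    {W : ℝ → ℝ} (hW : Measurable W) :
    IndepFun Z (fun ω => W (A (i + 1) ω e)) ℙ := by
  have h1 : iIndep (fun p : ℕ × G.edgeSet => mSlice G A p) ℙ := by
    have := (iIndepFun_iff_iIndep (m := fun _ : ℕ × G.edgeSet =>
      (inferInstance : MeasurableSpace ℝ))
      (fun (p : ℕ × G.edgeSet) ω => A (p.1 + 1) ω p.2) ℙ).mp hAindep
    exact this
  have hdisj : Disjoint {q : ℕ × G.edgeSet | q.1 < i} ({(i, e)} : Set (ℕ × G.edgeSet)) := by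
    rw [Set.disjoint_left]
    rintro q hq rfl
    exact lt_irrefl i hq
  have hind : Indep (filt G A i) (mSlice G A (i, e)) ℙ := by
    have h2 := indep_iSup_of_disjoint (mSlice_le hAmeas) h1 hdisj
    have h3 : (⨆ p ∈ ({(i, e)} : Set (ℕ × G.edgeSet)), mSlice G A p) = mSlice G A (i, e) := by
      simp
    rw [h3] at h2
    exact h2
  rw [IndepFun_iff_Indep]
  refine indep_mono hind (measurable_iff_comap_le.mp hZ) (measurable_iff_comap_le.mp ?_)
  exact hW.comp (measA_slice (i, e))

end Prob

end SIAux

open SIAux in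
/-- **Theorem 2A (global error bound for the SI process).** Suppose `3 ≤ k`, `0 < h ≤ 1`,
and `A₁, A₂, …` are i.i.d. random edge-timer vectors, each a vector of independent
exponential rate-1 random variables indexed by the edges of `G` (equivalently, the doubly
indexed family of all components is independent with exponential rate-1 marginals).
Let `X₀ = X̃₀ = x₀`, `Xᵢ = g(Xᵢ₋₁, Aᵢ)` and `X̃ᵢ = g̃(X̃ᵢ₋₁, Aᵢ)`.  Then for every `i ≥ 0`,
`E[‖Xᵢ - X̃ᵢ‖₁] ≤ C_SI * K_SI * h` where `C_SI = n * k² * e^(k-2)`,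
`K_SI = (e^(k*T) - 1)/k` and `T = i*h`. -/
theorem si_global_error_bound {Ω : Type*} [MeasureSpace Ω]
    [IsProbabilityMeasure (ℙ : Measure Ω)]
    {V : Type*} [Fintype V] (G : SimpleGraph V) (k : ℕ) (hk : 3 ≤ k)
    (hdeg : ∀ j : V, (G.neighborSet j).ncard ≤ k)
    (h : ℝ) (h0 : 0 < h) (h1 : h ≤ 1)
    (A : ℕ → Ω → G.edgeSet → ℝ)
    (hAmeas : ∀ i : ℕ, ∀ e : G.edgeSet, Measurable fun ω => A (i + 1) ω e)
    (hAindep : iIndepFun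
      (fun (p : ℕ × G.edgeSet) ω => A (p.1 + 1) ω p.2) ℙ)
    (hAdist : ∀ i : ℕ, ∀ e : G.edgeSet,
      Measure.map (fun ω => A (i + 1) ω e) ℙ = expMeasure 1)
    (x₀ : V → Bool) (X Xt : ℕ → Ω → V → Bool)
    (hX0 : ∀ ω, X 0 ω = x₀) (hXt0 : ∀ ω, Xt 0 ω = x₀)
    (hX : ∀ i : ℕ, ∀ ω, X (i + 1) ω = siDTS G h (X i ω) (A (i + 1) ω))
    (hXt : ∀ i : ℕ, ∀ ω, Xt (i + 1) ω = siDES G h (Xt i ω) (A (i + 1) ω)) :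
    ∀ i : ℕ,
      ∫ ω, ∑ j : V, |boolToR (X i ω j) - boolToR (Xt i ω j)| ∂ℙ ≤
        ((Fintype.card V : ℝ) * (k : ℝ) ^ 2 * Real.exp ((k : ℝ) - 2)) *
          ((Real.exp ((k : ℝ) * ((i : ℝ) * h)) - 1) / (k : ℝ)) * h := by
  classical
  have hk0 : (0:ℝ) < (k:ℝ) := by
    have : (3:ℝ) ≤ (k:ℝ) := by exact_mod_cast hk
    linarith
  -- monotone coupling
  have hle : ∀ i ω j, X i ω j = true → Xt i ω j = true := by
    intro i
    induction i with
    | zero => intro ω j hj; rw [hXt0]; rw [hX0] at hj; exact hj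
    | succ i ih =>
      intro ω j hj
      rw [hX i ω] at hj
      rw [hXt i ω]
      exact siDTS_le_siDES G h (Xt i ω) (A (i+1) ω) j
        (siDTS_mono G h (ih ω) (A (i+1) ω) j hj)
  -- measurability
  have hmeas := meas_states (G := G) (h := h) (A := A) hX0 hXt0 hX hXt
  have hmX : ∀ i j, Measurable fun ω => X i ω j :=
    fun i j => ((hmeas i).1 j).mono (filt_le hAmeas i) le_rfl
  have hmXt : ∀ i j, Measurable fun ω => Xt i ω j :=
    fun i j => ((hmeas i).2 j).mono (filt_le hAmeas i) le_rfl
  have hmdiffF : ∀ i j, Measurable[filt G A i]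
      fun ω => boolToR (Xt i ω j) - boolToR (X i ω j) :=
    fun i j => (measurable_boolToR_comp ((hmeas i).2 j)).sub
      (measurable_boolToR_comp ((hmeas i).1 j))
  have hmdiff : ∀ i j, Measurable fun ω => boolToR (Xt i ω j) - boolToR (X i ω j) :=
    fun i j => (hmdiffF i j).mono (filt_le hAmeas i) le_rfl
  have hdiff0 : ∀ i ω j, 0 ≤ boolToR (Xt i ω j) - boolToR (X i ω j) :=
    fun i ω j => diff_nonneg (hle i ω j)
  have hdiff1 : ∀ i ω j, boolToR (Xt i ω j) - boolToR (X i ω j) ≤ 1 := by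
    intro i ω j
    have := boolToR_le_one (Xt i ω j)
    have := boolToR_nonneg (X i ω j)
    linarith
  have hint_diff : ∀ i j,
      Integrable (fun ω => boolToR (Xt i ω j) - boolToR (X i ω j)) ℙ := by
    intro i j
    refine integrable_bdd 1 (hmdiff i j) fun ω => ?_
    rw [abs_le]
    constructor
    · linarith [hdiff0 i ω j]
    · exact hdiff1 i ω j
  set d : ℕ → ℝ :=
    fun i => ∫ ω, ∑ j : V, (boolToR (Xt i ω j) - boolToR (X i ω j)) ∂ℙ with hd
  have hint_sum : ∀ i, Integrable
      (fun ω => ∑ j : V, (boolToR (Xt i ω j) - boolToR (X i ω j))) ℙ :=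
    fun i => integrable_finset_sum _ fun j _ => hint_diff i j
  have hgoal : ∀ i, (∫ ω, ∑ j : V, |boolToR (X i ω j) - boolToR (Xt i ω j)| ∂ℙ) = d i := by
    intro i
    apply integral_congr_ae
    apply Filter.Eventually.of_forall
    intro ω
    exact Finset.sum_congr rfl fun j _ => abs_boolToR_diff (hle i ω j)
  have hd_eq : ∀ i, d i = ∑ j : V, ∫ ω, (boolToR (Xt i ω j) - boolToR (X i ω j)) ∂ℙ :=
    fun i => integral_finset_sum _ fun j _ => hint_diff i j
  have hEdiff_nonneg : ∀ i j, 0 ≤ ∫ ω, (boolToR (Xt i ω j) - boolToR (X i ω j)) ∂ℙ :=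
    fun i j => integral_nonneg fun ω => hdiff0 i ω j
  have hd_nonneg : ∀ i, 0 ≤ d i := by
    intro i
    rw [hd_eq i]
    exact Finset.sum_nonneg fun j _ => hEdiff_nonneg i j
  -- basic expectation of an indicator of a fresh timer
  have hPval : ∀ (i : ℕ) (e : G.edgeSet),
      (∫ ω, (if A (i+1) ω e ≤ h then (1:ℝ) else 0) ∂ℙ) = 1 - Real.exp (-h) := by
    intro i e
    have hrw : (fun ω => if A (i+1) ω e ≤ h then (1:ℝ) else 0)
        = Set.indicator ((fun ω => A (i+1) ω e) ⁻¹' Set.Iic h) (fun _ => (1:ℝ)) := by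
      funext ω
      rw [Set.indicator_apply]
      simp [Set.mem_Iic]
    rw [hrw, integral_indicator_const _ ((hAmeas i e) measurableSet_Iic)]
    have hmap : ℙ ((fun ω => A (i+1) ω e) ⁻¹' Set.Iic h) = expMeasure 1 (Set.Iic h) := by
      rw [← hAdist i e, Measure.map_apply (hAmeas i e) measurableSet_Iic]
    rw [smul_eq_mul, mul_one, measureReal_def, hmap, expMeasure_Iic h0.le]
  have hP0 : 0 ≤ 1 - Real.exp (-h) := by
    have : Real.exp (-h) ≤ 1 := Real.exp_le_one_iff.mpr (by linarith)
    linarith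
  have hPh : 1 - Real.exp (-h) ≤ h := by
    have := Real.add_one_le_exp (-h)
    linarith
  -- a.e. nonnegative timers
  have hae : ∀ i : ℕ, ∀ᵐ ω ∂ℙ, ∀ e : G.edgeSet, 0 ≤ A (i+1) ω e := by
    intro i
    rw [MeasureTheory.ae_all_iff]
    intro e
    have hnull : ℙ ((fun ω => A (i+1) ω e) ⁻¹' Set.Iio 0) = 0 := by
      rw [← Measure.map_apply (hAmeas i e) measurableSet_Iio, hAdist i e, expMeasure_Iio_zero]
    rw [ae_iff]
    convert hnull using 2
    ext ω
    simp [not_le]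
  -- indicator measurability / integrability helpers
  have hWmeas : Measurable fun t : ℝ => if t ≤ h then (1:ℝ) else 0 := by
    exact Measurable.ite measurableSet_Iic measurable_const measurable_const
  have hint_ind : ∀ (i : ℕ) (e : Sym2 V),
      Integrable (fun ω => if aext G (A (i+1) ω) e ≤ h then (1:ℝ) else 0) ℙ := by
    intro i e
    refine integrable_bdd 1 (meas_aext_ind hAmeas i e) fun ω => ?_
    split <;> norm_num
  have hint_pair : ∀ (i : ℕ) (j : V),
      Integrable (fun ω => if pairE G h (A (i+1) ω) j then (1:ℝ) else 0) ℙ := by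
    intro i j
    refine integrable_bdd 1 (meas_pairB hAmeas i j) fun ω => ?_
    split <;> norm_num
  -- per-node indicator for the nbr term
  have hint_nbr : ∀ (i : ℕ) (j j' : V), Integrable (fun ω =>
      if G.Adj j j' then (boolToR (Xt i ω j') - boolToR (X i ω j')) *
        (if aext G (A (i+1) ω) s(j, j') ≤ h then (1:ℝ) else 0) else 0) ℙ := by
    intro i j j'
    by_cases hadj : G.Adj j j'
    · simp only [if_pos hadj]
      refine integrable_bdd 1 ((hmdiff i j').mul (meas_aext_ind hAmeas i _)) fun ω => ?_
      rw [abs_mul]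
      have h1 : |boolToR (Xt i ω j') - boolToR (X i ω j')| ≤ 1 := by
        rw [abs_le]; exact ⟨by linarith [hdiff0 i ω j'], hdiff1 i ω j'⟩
      have h2 : |if aext G (A (i+1) ω) s(j, j') ≤ h then (1:ℝ) else 0| ≤ 1 := by
        split <;> norm_num
      calc |boolToR (Xt i ω j') - boolToR (X i ω j')| *
            |if aext G (A (i+1) ω) s(j, j') ≤ h then (1:ℝ) else 0|
          ≤ 1 * 1 := mul_le_mul h1 h2 (abs_nonneg _) zero_le_one
        _ = 1 := one_mul 1
    · simp only [if_neg hadj]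
      exact integrable_const 0
  -- expectation of a single aext indicator on an actual edge
  have hPaext : ∀ (i : ℕ) {u v : V} (huv : G.Adj u v),
      (∫ ω, (if aext G (A (i+1) ω) s(u,v) ≤ h then (1:ℝ) else 0) ∂ℙ) = 1 - Real.exp (-h) := by
    intro i u v huv
    have : (fun ω => if aext G (A (i+1) ω) s(u,v) ≤ h then (1:ℝ) else 0)
        = fun ω => if A (i+1) ω ⟨s(u,v), (SimpleGraph.mem_edgeSet G).mpr huv⟩ ≤ h
            then (1:ℝ) else 0 := by
      funext ω; rw [aext_of_adj G _ huv]
    rw [this, hPval]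
  -- the one-step recursion bound
  have hstep : ∀ i : ℕ, d (i+1) ≤
      (Fintype.card V : ℝ) * (k:ℝ)^2 * h^2 + (1 + (k:ℝ)*h) * d i := by
    intro i
    have hint_nbrsum : ∀ j, Integrable (fun ω => ∑ j' : V,
        (if G.Adj j j' then (boolToR (Xt i ω j') - boolToR (X i ω j')) *
          (if aext G (A (i+1) ω) s(j, j') ≤ h then (1:ℝ) else 0) else 0)) ℙ :=
      fun j => integrable_finset_sum _ fun j' _ => hint_nbr i j j'
    have hint_F : Integrable (fun ω =>
        (∑ j : V, (if pairE G h (A (i+1) ω) j then (1:ℝ) else 0))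
        + ((∑ j : V, (boolToR (Xt i ω j) - boolToR (X i ω j)))
        + (∑ j : V, ∑ j' : V, (if G.Adj j j' then
            (boolToR (Xt i ω j') - boolToR (X i ω j')) *
              (if aext G (A (i+1) ω) s(j, j') ≤ h then (1:ℝ) else 0) else 0)))) ℙ :=
      (integrable_finset_sum _ fun j _ => hint_pair i j).add
        ((hint_sum i).add (integrable_finset_sum _ fun j _ => hint_nbrsum j))
    -- pointwise a.e. bound
    have hptwise : (fun ω => ∑ j : V, (boolToR (Xt (i+1) ω j) - boolToR (X (i+1) ω j)))
        ≤ᵐ[ℙ] (fun ω =>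
        (∑ j : V, (if pairE G h (A (i+1) ω) j then (1:ℝ) else 0))
        + ((∑ j : V, (boolToR (Xt i ω j) - boolToR (X i ω j)))
        + (∑ j : V, ∑ j' : V, (if G.Adj j j' then
            (boolToR (Xt i ω j') - boolToR (X i ω j')) *
              (if aext G (A (i+1) ω) s(j, j') ≤ h then (1:ℝ) else 0) else 0)))) := by
      filter_upwards [hae i] with ω hω
      have hcalc : ∑ j : V, (boolToR (Xt (i+1) ω j) - boolToR (X (i+1) ω j))
          ≤ ∑ j : V, ((if pairE G h (A (i+1) ω) j then (1:ℝ) else 0)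
            + ((boolToR (Xt i ω j) - boolToR (X i ω j))
            + (∑ j' : V, (if G.Adj j j' then
                (boolToR (Xt i ω j') - boolToR (X i ω j')) *
                  (if aext G (A (i+1) ω) s(j, j') ≤ h then (1:ℝ) else 0) else 0)))) := by
        apply Finset.sum_le_sum
        intro j _
        rw [hX i ω, hXt i ω]
        have := key_step G h (fun j' => hle i ω j') hω j
        linarith
      calc ∑ j : V, (boolToR (Xt (i+1) ω j) - boolToR (X (i+1) ω j))
          ≤ _ := hcalc
        _ = _ := by rw [Finset.sum_add_distrib, Finset.sum_add_distrib]
    have hmain : d (i+1) ≤ ∫ ω, (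
        (∑ j : V, (if pairE G h (A (i+1) ω) j then (1:ℝ) else 0))
        + ((∑ j : V, (boolToR (Xt i ω j) - boolToR (X i ω j)))
        + (∑ j : V, ∑ j' : V, (if G.Adj j j' then
            (boolToR (Xt i ω j') - boolToR (X i ω j')) *
              (if aext G (A (i+1) ω) s(j, j') ≤ h then (1:ℝ) else 0) else 0)))) ∂ℙ :=
      integral_mono_ae (hint_sum (i+1)) hint_F hptwise
    have hint_23 : Integrable (fun ω =>
        (∑ j : V, (boolToR (Xt i ω j) - boolToR (X i ω j)))
        + (∑ j : V, ∑ j' : V, (if G.Adj j j' then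
            (boolToR (Xt i ω j') - boolToR (X i ω j')) *
              (if aext G (A (i+1) ω) s(j, j') ≤ h then (1:ℝ) else 0) else 0))) ℙ :=
      (hint_sum i).add (integrable_finset_sum _ fun j _ => hint_nbrsum j)
    rw [integral_add (integrable_finset_sum _ fun j _ => hint_pair i j) hint_23,
      integral_add (hint_sum i) (integrable_finset_sum _ fun j _ => hint_nbrsum j)] at hmain
    -- bound the pair term
    have hIpair : (∫ ω, ∑ j : V, (if pairE G h (A (i+1) ω) j then (1:ℝ) else 0) ∂ℙ)
        ≤ (Fintype.card V : ℝ) * ((k:ℝ)^2 * h^2) := by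
      rw [integral_finset_sum _ fun j _ => hint_pair i j]
      have hper : ∀ j : V, (∫ ω, (if pairE G h (A (i+1) ω) j then (1:ℝ) else 0) ∂ℙ)
          ≤ (k:ℝ)^2 * h^2 := by
        intro j
        -- integrability of the Q terms
        have hQint : ∀ j' j'' : V, Integrable (fun ω =>
            if G.Adj j j' ∧ G.Adj j' j'' ∧ j'' ≠ j then
              (if aext G (A (i+1) ω) s(j, j') ≤ h then (1:ℝ) else 0) *
                (if aext G (A (i+1) ω) s(j', j'') ≤ h then (1:ℝ) else 0) else 0) ℙ := by
          intro j' j''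
          by_cases hc : G.Adj j j' ∧ G.Adj j' j'' ∧ j'' ≠ j
          · simp only [if_pos hc]
            refine integrable_bdd 1 ((meas_aext_ind hAmeas i _).mul
              (meas_aext_ind hAmeas i _)) fun ω => ?_
            rw [abs_mul]
            have h1 : |if aext G (A (i+1) ω) s(j, j') ≤ h then (1:ℝ) else 0| ≤ 1 := by
              split <;> norm_num
            have h2 : |if aext G (A (i+1) ω) s(j', j'') ≤ h then (1:ℝ) else 0| ≤ 1 := by
              split <;> norm_num
            calc _ ≤ 1 * 1 := mul_le_mul h1 h2 (abs_nonneg _) zero_le_one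
              _ = (1:ℝ) := one_mul 1
          · simp only [if_neg hc]
            exact integrable_const 0
        -- pointwise domination of the pair indicator
        have hpt : ∀ ω, (if pairE G h (A (i+1) ω) j then (1:ℝ) else 0)
            ≤ ∑ j' : V, ∑ j'' : V, (if G.Adj j j' ∧ G.Adj j' j'' ∧ j'' ≠ j then
              (if aext G (A (i+1) ω) s(j, j') ≤ h then (1:ℝ) else 0) *
                (if aext G (A (i+1) ω) s(j', j'') ≤ h then (1:ℝ) else 0) else 0) := by
          intro ω
          have hQnn : ∀ j' j'' : V, (0:ℝ) ≤ (if G.Adj j j' ∧ G.Adj j' j'' ∧ j'' ≠ j then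
              (if aext G (A (i+1) ω) s(j, j') ≤ h then (1:ℝ) else 0) *
                (if aext G (A (i+1) ω) s(j', j'') ≤ h then (1:ℝ) else 0) else 0) := by
            intro j' j''
            split
            · apply mul_nonneg <;> (split <;> norm_num)
            · exact le_rfl
          split
          · rename_i hp
            obtain ⟨j', j'', h1, h2, h3, h4, h5⟩ := hp
            have hterm : (if G.Adj j j' ∧ G.Adj j' j'' ∧ j'' ≠ j then
                (if aext G (A (i+1) ω) s(j, j') ≤ h then (1:ℝ) else 0) *
                  (if aext G (A (i+1) ω) s(j', j'') ≤ h then (1:ℝ) else 0) else 0) = 1 := by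
              rw [if_pos ⟨h1, h2, h3⟩, if_pos h4, if_pos h5, one_mul]
            have hinner : (1:ℝ) ≤ ∑ j'' : V, (if G.Adj j j' ∧ G.Adj j' j'' ∧ j'' ≠ j then
                (if aext G (A (i+1) ω) s(j, j') ≤ h then (1:ℝ) else 0) *
                  (if aext G (A (i+1) ω) s(j', j'') ≤ h then (1:ℝ) else 0) else 0) := by
              have := Finset.single_le_sum (f := fun j'' : V =>
                (if G.Adj j j' ∧ G.Adj j' j'' ∧ j'' ≠ j then
                (if aext G (A (i+1) ω) s(j, j') ≤ h then (1:ℝ) else 0) *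
                  (if aext G (A (i+1) ω) s(j', j'') ≤ h then (1:ℝ) else 0) else 0))
                (fun x _ => hQnn j' x) (Finset.mem_univ j'')
              exact le_trans (le_of_eq hterm.symm) this
            calc (1:ℝ) ≤ _ := hinner
              _ ≤ _ := Finset.single_le_sum (f := fun j' : V => ∑ j'' : V,
                  (if G.Adj j j' ∧ G.Adj j' j'' ∧ j'' ≠ j then
                  (if aext G (A (i+1) ω) s(j, j') ≤ h then (1:ℝ) else 0) *
                    (if aext G (A (i+1) ω) s(j', j'') ≤ h then (1:ℝ) else 0) else 0))
                  (fun x _ => Finset.sum_nonneg fun y _ => hQnn x y) (Finset.mem_univ j')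
          · exact Finset.sum_nonneg fun j' _ => Finset.sum_nonneg fun j'' _ => hQnn j' j''
        -- bound each Q-integral
        have hQb : ∀ j' j'' : V, (∫ ω, (if G.Adj j j' ∧ G.Adj j' j'' ∧ j'' ≠ j then
            (if aext G (A (i+1) ω) s(j, j') ≤ h then (1:ℝ) else 0) *
              (if aext G (A (i+1) ω) s(j', j'') ≤ h then (1:ℝ) else 0) else 0) ∂ℙ)
            ≤ (if G.Adj j j' then (1:ℝ) else 0) * ((if G.Adj j' j'' then (1:ℝ) else 0) * (h*h)) := by
          intro j' j''
          by_cases hc : G.Adj j j' ∧ G.Adj j' j'' ∧ j'' ≠ j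
          · have he₁ : s(j, j') ∈ G.edgeSet := (SimpleGraph.mem_edgeSet G).mpr hc.1
            have he₂ : s(j', j'') ∈ G.edgeSet := (SimpleGraph.mem_edgeSet G).mpr hc.2.1
            have hne : (⟨s(j,j'), he₁⟩ : G.edgeSet) ≠ ⟨s(j',j''), he₂⟩ := by
              intro hcon
              have : s(j,j') = s(j',j'') := congrArg Subtype.val hcon
              have hjmem : j ∈ s(j',j'') := this ▸ (Sym2.mem_iff.mpr (Or.inl rfl))
              rcases Sym2.mem_iff.mp hjmem with hc1 | hc2
              · exact hc.1.ne hc1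
              · exact hc.2.2 hc2.symm
            have hrw : (fun ω => (if G.Adj j j' ∧ G.Adj j' j'' ∧ j'' ≠ j then
                (if aext G (A (i+1) ω) s(j, j') ≤ h then (1:ℝ) else 0) *
                  (if aext G (A (i+1) ω) s(j', j'') ≤ h then (1:ℝ) else 0) else 0))
                = (fun ω => if A (i+1) ω ⟨s(j,j'), he₁⟩ ≤ h then (1:ℝ) else 0) *
                  (fun ω => if A (i+1) ω ⟨s(j',j''), he₂⟩ ≤ h then (1:ℝ) else 0) := by
              funext ω
              rw [if_pos hc]
              simp only [Pi.mul_apply]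
              rw [aext_of_adj G _ hc.1, aext_of_adj G _ hc.2.1]
            have hpne : ((i, ⟨s(j,j'), he₁⟩) : ℕ × G.edgeSet) ≠ (i, ⟨s(j',j''), he₂⟩) := by
              simp only [ne_eq, Prod.mk.injEq, true_and]
              exact hne
            have hindep : IndepFun (fun ω => if A (i+1) ω ⟨s(j,j'), he₁⟩ ≤ h then (1:ℝ) else 0)
                (fun ω => if A (i+1) ω ⟨s(j',j''), he₂⟩ ≤ h then (1:ℝ) else 0) ℙ := by
              have hbase := hAindep.indepFun hpne
              exact hbase.comp hWmeas hWmeas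
            have hint1 : Integrable (fun ω => if A (i+1) ω ⟨s(j,j'), he₁⟩ ≤ h
                then (1:ℝ) else 0) ℙ := by
              have := hint_ind i s(j,j')
              have hrw1 : (fun ω => if aext G (A (i+1) ω) s(j,j') ≤ h then (1:ℝ) else 0)
                  = fun ω => if A (i+1) ω ⟨s(j,j'), he₁⟩ ≤ h then (1:ℝ) else 0 := by
                funext ω; rw [aext_of_adj G _ hc.1]
              rwa [hrw1] at this
            have hint2 : Integrable (fun ω => if A (i+1) ω ⟨s(j',j''), he₂⟩ ≤ h
                then (1:ℝ) else 0) ℙ := by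
              have := hint_ind i s(j',j'')
              have hrw2 : (fun ω => if aext G (A (i+1) ω) s(j',j'') ≤ h then (1:ℝ) else 0)
                  = fun ω => if A (i+1) ω ⟨s(j',j''), he₂⟩ ≤ h then (1:ℝ) else 0 := by
                funext ω; rw [aext_of_adj G _ hc.2.1]
              rwa [hrw2] at this
            rw [hrw, hindep.integral_mul_eq_mul_integral hint1.aestronglyMeasurable hint2.aestronglyMeasurable]
            rw [if_pos hc.1, if_pos hc.2.1, one_mul, one_mul]
            rw [hPval, hPval]
            have := mul_le_mul hPh hPh hP0 h0.le
            linarith [this]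
          · have : (fun ω => (if G.Adj j j' ∧ G.Adj j' j'' ∧ j'' ≠ j then
                (if aext G (A (i+1) ω) s(j, j') ≤ h then (1:ℝ) else 0) *
                  (if aext G (A (i+1) ω) s(j', j'') ≤ h then (1:ℝ) else 0) else 0))
                = fun _ => (0:ℝ) := by
              funext ω; rw [if_neg hc]
            rw [this, integral_zero]
            apply mul_nonneg
            · split <;> norm_num
            · apply mul_nonneg
              · split <;> norm_num
              · positivity
        -- assemble the per-node pair bound
        have hs1 : (∫ ω, (if pairE G h (A (i+1) ω) j then (1:ℝ) else 0) ∂ℙ)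
            ≤ ∑ j' : V, ∑ j'' : V, (∫ ω, (if G.Adj j j' ∧ G.Adj j' j'' ∧ j'' ≠ j then
              (if aext G (A (i+1) ω) s(j, j') ≤ h then (1:ℝ) else 0) *
                (if aext G (A (i+1) ω) s(j', j'') ≤ h then (1:ℝ) else 0) else 0) ∂ℙ) := by
          have hint_QQ : Integrable (fun ω => ∑ j' : V, ∑ j'' : V,
              (if G.Adj j j' ∧ G.Adj j' j'' ∧ j'' ≠ j then
              (if aext G (A (i+1) ω) s(j, j') ≤ h then (1:ℝ) else 0) *
                (if aext G (A (i+1) ω) s(j', j'') ≤ h then (1:ℝ) else 0) else 0)) ℙ :=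
            integrable_finset_sum _ fun j' _ => integrable_finset_sum _ fun j'' _ => hQint j' j''
          calc (∫ ω, (if pairE G h (A (i+1) ω) j then (1:ℝ) else 0) ∂ℙ)
              ≤ ∫ ω, (∑ j' : V, ∑ j'' : V, (if G.Adj j j' ∧ G.Adj j' j'' ∧ j'' ≠ j then
                (if aext G (A (i+1) ω) s(j, j') ≤ h then (1:ℝ) else 0) *
                  (if aext G (A (i+1) ω) s(j', j'') ≤ h then (1:ℝ) else 0) else 0)) ∂ℙ :=
                integral_mono (hint_pair i j) hint_QQ hpt
            _ = ∑ j' : V, ∑ j'' : V, (∫ ω, (if G.Adj j j' ∧ G.Adj j' j'' ∧ j'' ≠ j then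
                (if aext G (A (i+1) ω) s(j, j') ≤ h then (1:ℝ) else 0) *
                  (if aext G (A (i+1) ω) s(j', j'') ≤ h then (1:ℝ) else 0) else 0) ∂ℙ) := by
                rw [integral_finset_sum _ fun j' _ =>
                  integrable_finset_sum _ fun j'' _ => hQint j' j'']
                exact Finset.sum_congr rfl fun j' _ =>
                  integral_finset_sum _ fun j'' _ => hQint j' j''
        refine le_trans hs1 ?_
        have hsum2 : ∀ j' : V, ∑ j'' : V, ((if G.Adj j j' then (1:ℝ) else 0) *
            ((if G.Adj j' j'' then (1:ℝ) else 0) * (h*h)))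
            ≤ (if G.Adj j j' then (1:ℝ) else 0) * ((k:ℝ)*(h*h)) := by
          intro j'
          rw [← Finset.mul_sum]
          apply mul_le_mul_of_nonneg_left _ (by split <;> norm_num)
          have : ∀ j'' : V, (if G.Adj j' j'' then (1:ℝ) else 0) * (h*h)
              = (if G.Adj j' j'' then (h*h) else 0) := by
            intro j''; split <;> ring
          rw [Finset.sum_congr rfl fun j'' _ => this j'']
          exact sum_adj_le G k hdeg j' (by positivity)
        calc ∑ j' : V, ∑ j'' : V, (∫ ω, (if G.Adj j j' ∧ G.Adj j' j'' ∧ j'' ≠ j then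
              (if aext G (A (i+1) ω) s(j, j') ≤ h then (1:ℝ) else 0) *
                (if aext G (A (i+1) ω) s(j', j'') ≤ h then (1:ℝ) else 0) else 0) ∂ℙ)
            ≤ ∑ j' : V, ∑ j'' : V, ((if G.Adj j j' then (1:ℝ) else 0) *
                ((if G.Adj j' j'' then (1:ℝ) else 0) * (h*h))) :=
              Finset.sum_le_sum fun j' _ => Finset.sum_le_sum fun j'' _ => hQb j' j''
          _ ≤ ∑ j' : V, (if G.Adj j j' then (1:ℝ) else 0) * ((k:ℝ)*(h*h)) :=
              Finset.sum_le_sum fun j' _ => hsum2 j'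
          _ ≤ (k:ℝ)^2 * h^2 := by
              have : ∀ j' : V, (if G.Adj j j' then (1:ℝ) else 0) * ((k:ℝ)*(h*h))
                  = (if G.Adj j j' then ((k:ℝ)*(h*h)) else 0) := by
                intro j'; split <;> ring
              rw [Finset.sum_congr rfl fun j' _ => this j']
              have := sum_adj_le G k hdeg j (c := (k:ℝ)*(h*h)) (by positivity)
              calc ∑ j' : V, (if G.Adj j j' then ((k:ℝ)*(h*h)) else 0)
                  ≤ (k:ℝ) * ((k:ℝ)*(h*h)) := this
                _ = (k:ℝ)^2 * h^2 := by ring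
      calc ∑ j : V, (∫ ω, (if pairE G h (A (i+1) ω) j then (1:ℝ) else 0) ∂ℙ)
          ≤ ∑ _j : V, (k:ℝ)^2*h^2 := Finset.sum_le_sum fun j _ => hper j
        _ = (Fintype.card V : ℝ) * ((k:ℝ)^2 * h^2) := by
            rw [Finset.sum_const, Finset.card_univ, nsmul_eq_mul]
    -- bound the nbr term
    have hInbr : (∫ ω, ∑ j : V, ∑ j' : V, (if G.Adj j j' then
        (boolToR (Xt i ω j') - boolToR (X i ω j')) *
          (if aext G (A (i+1) ω) s(j, j') ≤ h then (1:ℝ) else 0) else 0) ∂ℙ)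
        ≤ (k:ℝ) * h * d i := by
      rw [integral_finset_sum _ fun j _ => hint_nbrsum j]
      have hswap : ∀ j : V, (∫ ω, ∑ j' : V, (if G.Adj j j' then
          (boolToR (Xt i ω j') - boolToR (X i ω j')) *
            (if aext G (A (i+1) ω) s(j, j') ≤ h then (1:ℝ) else 0) else 0) ∂ℙ)
          = ∑ j' : V, (∫ ω, (if G.Adj j j' then
          (boolToR (Xt i ω j') - boolToR (X i ω j')) *
            (if aext G (A (i+1) ω) s(j, j') ≤ h then (1:ℝ) else 0) else 0) ∂ℙ) :=
        fun j => integral_finset_sum _ fun j' _ => hint_nbr i j j'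
      rw [Finset.sum_congr rfl fun j _ => hswap j]
      have hval : ∀ j j' : V, (∫ ω, (if G.Adj j j' then
          (boolToR (Xt i ω j') - boolToR (X i ω j')) *
            (if aext G (A (i+1) ω) s(j, j') ≤ h then (1:ℝ) else 0) else 0) ∂ℙ)
          ≤ (if G.Adj j j' then
            ((∫ ω, (boolToR (Xt i ω j') - boolToR (X i ω j')) ∂ℙ) * h) else 0) := by
        intro j j'
        by_cases hadj : G.Adj j j'
        · simp only [if_pos hadj]
          have he : s(j, j') ∈ G.edgeSet := (SimpleGraph.mem_edgeSet G).mpr hadj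
          have hrw : (fun ω => (boolToR (Xt i ω j') - boolToR (X i ω j')) *
              (if aext G (A (i+1) ω) s(j, j') ≤ h then (1:ℝ) else 0))
              = (fun ω => (boolToR (Xt i ω j') - boolToR (X i ω j'))) *
                (fun ω => if A (i+1) ω ⟨s(j,j'), he⟩ ≤ h then (1:ℝ) else 0) := by
            funext ω
            simp only [Pi.mul_apply]
            rw [aext_of_adj G _ hadj]
          have hindep : IndepFun (fun ω => (boolToR (Xt i ω j') - boolToR (X i ω j')))
              (fun ω => if A (i+1) ω ⟨s(j,j'), he⟩ ≤ h then (1:ℝ) else 0) ℙ := by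
            have := indep_past hAmeas hAindep i ⟨s(j,j'), he⟩ (hmdiffF i j') hWmeas
            exact this
          have hint2 : Integrable (fun ω => if A (i+1) ω ⟨s(j,j'), he⟩ ≤ h
              then (1:ℝ) else 0) ℙ := by
            have := hint_ind i s(j,j')
            have hrw2 : (fun ω => if aext G (A (i+1) ω) s(j,j') ≤ h then (1:ℝ) else 0)
                = fun ω => if A (i+1) ω ⟨s(j,j'), he⟩ ≤ h then (1:ℝ) else 0 := by
              funext ω; rw [aext_of_adj G _ hadj]
            rwa [hrw2] at this
          rw [hrw, hindep.integral_mul_eq_mul_integral (hint_diff i j').aestronglyMeasurable hint2.aestronglyMeasurable, hPval]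
          exact mul_le_mul_of_nonneg_left hPh (hEdiff_nonneg i j')
        · simp only [if_neg hadj, integral_zero]
          exact le_rfl
      calc ∑ j : V, ∑ j' : V, (∫ ω, (if G.Adj j j' then
            (boolToR (Xt i ω j') - boolToR (X i ω j')) *
              (if aext G (A (i+1) ω) s(j, j') ≤ h then (1:ℝ) else 0) else 0) ∂ℙ)
          ≤ ∑ j : V, ∑ j' : V, (if G.Adj j j' then
              ((∫ ω, (boolToR (Xt i ω j') - boolToR (X i ω j')) ∂ℙ) * h) else 0) :=
            Finset.sum_le_sum fun j _ => Finset.sum_le_sum fun j' _ => hval j j'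
        _ = ∑ j' : V, ∑ j : V, (if G.Adj j' j then
              ((∫ ω, (boolToR (Xt i ω j') - boolToR (X i ω j')) ∂ℙ) * h) else 0) := by
            rw [Finset.sum_comm]
            apply Finset.sum_congr rfl
            intro j' _
            apply Finset.sum_congr rfl
            intro j _
            congr 1
            exact propext (SimpleGraph.adj_comm G j j')
        _ ≤ ∑ j' : V, (k:ℝ) * ((∫ ω, (boolToR (Xt i ω j') - boolToR (X i ω j')) ∂ℙ) * h) := by
            apply Finset.sum_le_sum
            intro j' _
            exact sum_adj_le G k hdeg j' (mul_nonneg (hEdiff_nonneg i j') h0.le)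
        _ = (k:ℝ) * h * d i := by
            rw [hd_eq i, Finset.mul_sum]
            apply Finset.sum_congr rfl
            intro j' _
            ring
    have hId : (∫ ω, ∑ j : V, (boolToR (Xt i ω j) - boolToR (X i ω j)) ∂ℙ) = d i := rfl
    rw [hId] at hmain
    calc d (i+1) ≤ _ := hmain
      _ ≤ (Fintype.card V : ℝ) * ((k:ℝ)^2 * h^2) + (d i + (k:ℝ) * h * d i) := by
          apply add_le_add hIpair
          exact add_le_add le_rfl hInbr
      _ = (Fintype.card V : ℝ) * (k:ℝ)^2 * h^2 + (1 + (k:ℝ)*h) * d i := by ring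
  -- final induction
  have hfinal : ∀ i : ℕ, d i * (k:ℝ) ≤
      ((Fintype.card V : ℝ) * (k:ℝ)^2 * Real.exp ((k:ℝ) - 2)) *
        (Real.exp ((k:ℝ) * ((i:ℝ) * h)) - 1) * h := by
    intro i
    induction i with
    | zero =>
      have hd0 : d 0 = 0 := by
        rw [hd_eq 0]
        apply Finset.sum_eq_zero
        intro j _
        have : (fun ω => boolToR (Xt 0 ω j) - boolToR (X 0 ω j)) = fun _ => (0:ℝ) := by
          funext ω; rw [hX0, hXt0]; ring
        rw [this, integral_zero]
      rw [hd0, zero_mul]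
      norm_num
    | succ i ih =>
      have hC0 : (0:ℝ) ≤ (Fintype.card V : ℝ) * (k:ℝ)^2 * Real.exp ((k:ℝ) - 2) := by positivity
      have hs1 : (1:ℝ) ≤ Real.exp ((k:ℝ) * ((i:ℝ) * h)) := Real.one_le_exp (by positivity)
      have hu : 1 + (k:ℝ)*h ≤ Real.exp ((k:ℝ)*h) := by
        have := Real.add_one_le_exp ((k:ℝ)*h); linarith
      have he2 : (1:ℝ) ≤ Real.exp ((k:ℝ)-2) := by
        apply Real.one_le_exp
        have : (3:ℝ) ≤ (k:ℝ) := by exact_mod_cast hk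
        linarith
      have hexp : Real.exp ((k:ℝ) * (((i:ℝ)+1) * h))
          = Real.exp ((k:ℝ) * ((i:ℝ) * h)) * Real.exp ((k:ℝ)*h) := by
        rw [← Real.exp_add]; congr 1; ring
      push_cast
      rw [hexp]
      have step1 : d (i+1) * (k:ℝ) ≤
          ((Fintype.card V : ℝ)*(k:ℝ)^2*h^2 + (1+(k:ℝ)*h) * d i) * (k:ℝ) :=
        mul_le_mul_of_nonneg_right (hstep i) hk0.le
      have step2 : (1+(k:ℝ)*h) * (d i * (k:ℝ)) ≤ (1+(k:ℝ)*h) *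
          (((Fintype.card V : ℝ) * (k:ℝ)^2 * Real.exp ((k:ℝ) - 2)) *
            (Real.exp ((k:ℝ) * ((i:ℝ) * h)) - 1) * h) :=
        mul_le_mul_of_nonneg_left ih (by positivity)
      have ht1 : 0 ≤ ((Fintype.card V : ℝ) * (k:ℝ)^2 * Real.exp ((k:ℝ) - 2))*h*
          (Real.exp ((k:ℝ) * ((i:ℝ) * h))*(Real.exp ((k:ℝ)*h) - 1 - (k:ℝ)*h)) := by
        apply mul_nonneg (mul_nonneg hC0 h0.le)
        apply mul_nonneg (by linarith) (by linarith)
      have ht2 : 0 ≤ (((Fintype.card V : ℝ) * (k:ℝ)^2 * Real.exp ((k:ℝ) - 2))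
          - (Fintype.card V : ℝ)*(k:ℝ)^2) * ((k:ℝ)*h^2) := by
        apply mul_nonneg _ (by positivity)
        have := mul_le_mul_of_nonneg_left he2
          (show (0:ℝ) ≤ (Fintype.card V : ℝ)*(k:ℝ)^2 by positivity)
        linarith [this]
      have hexpand : ((Fintype.card V : ℝ) * (k:ℝ)^2 * Real.exp ((k:ℝ) - 2)) *
          (Real.exp ((k:ℝ) * ((i:ℝ) * h)) * Real.exp ((k:ℝ)*h) - 1) * h
          = (1+(k:ℝ)*h) * (((Fintype.card V : ℝ) * (k:ℝ)^2 * Real.exp ((k:ℝ) - 2)) *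
              (Real.exp ((k:ℝ) * ((i:ℝ) * h)) - 1) * h)
            + (((Fintype.card V : ℝ) * (k:ℝ)^2 * Real.exp ((k:ℝ) - 2))*h*
                (Real.exp ((k:ℝ) * ((i:ℝ) * h))*(Real.exp ((k:ℝ)*h) - 1 - (k:ℝ)*h))
              + (((Fintype.card V : ℝ) * (k:ℝ)^2 * Real.exp ((k:ℝ) - 2))
                  - (Fintype.card V : ℝ)*(k:ℝ)^2) * ((k:ℝ)*h^2))
            + (Fintype.card V : ℝ)*(k:ℝ)^2*h^2*(k:ℝ) := by ring
      calc d (i+1) * (k:ℝ)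
          ≤ ((Fintype.card V : ℝ)*(k:ℝ)^2*h^2 + (1+(k:ℝ)*h) * d i) * (k:ℝ) := step1
        _ = (Fintype.card V : ℝ)*(k:ℝ)^2*h^2*(k:ℝ) + (1+(k:ℝ)*h) * (d i * (k:ℝ)) := by ring
        _ ≤ ((Fintype.card V : ℝ) * (k:ℝ)^2 * Real.exp ((k:ℝ) - 2)) *
            (Real.exp ((k:ℝ) * ((i:ℝ) * h)) * Real.exp ((k:ℝ)*h) - 1) * h := by
            rw [hexpand]
            linarith [step2, ht1, ht2]
  -- conclusion
  intro i
  rw [hgoal i]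
  have hrw : ((Fintype.card V : ℝ) * (k:ℝ)^2 * Real.exp ((k:ℝ) - 2)) *
      ((Real.exp ((k:ℝ) * ((i:ℝ) * h)) - 1) / (k:ℝ)) * h
      = (((Fintype.card V : ℝ) * (k:ℝ)^2 * Real.exp ((k:ℝ) - 2)) *
        (Real.exp ((k:ℝ) * ((i:ℝ) * h)) - 1) * h) / (k:ℝ) := by
    field_simp
  rw [hrw, le_div_iff₀ hk0]
  exact hfinal i
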